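/- Let ω > 0, a₀, a, φ₀, φ, λ₀, λ > 0, b > 0, and set d₀ = a₀·ω² + φ₀, d₁ = a·ω² + φ, e₀ = λ₀·ω/2, e₁ = λ·ω/2, K = d₀²·d₁² + 2·d₀·d₁·e₀·e₁ + d₀²·e₁² + e₀²·e₁². Define Q̃Mj(t) = (b·φ₀/K)·[(d₀·d₁² + d₁·e₀·e₁ + d₀·e₁²)·sin(ω·t) − e₀·e₁²·cos(ω·t)] and QMn(t) = (b·φ₀/K)·[−d₀·e₀·e₁·sin(ω·t) + e₀·(d₀·d₁ + e₀·e₁)·cos(ω·t)]. Then these functions satisfy the coupled second-order ODEs: a₀·Q̃Mj''(t) − φ₀·Q̃Mj(t) = −φ₀·b·sin(ω·t) − (λ/2)·QMn'(t) and a·QMn''(t) − φ·QMn(t) = −(λ₀/2)·Q̃Mj'(t) − (λ/2)·QMn'(t) for all t ∈ ℝ. -/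

import Mathlib

private lemma key (A B ω : ℝ) (t : ℝ) :
    HasDerivAt (fun t => A * Real.sin (ω * t) + B * Real.cos (ω * t))
      ((-(B * ω)) * Real.sin (ω * t) + (A * ω) * Real.cos (ω * t)) t := by
  have hid : HasDerivAt (fun t : ℝ => ω * t) ω t := by
    simpa using (hasDerivAt_id t).const_mul ω
  have hs := (Real.hasDerivAt_sin (ω * t)).comp t hid
  have hc := (Real.hasDerivAt_cos (ω * t)).comp t hid
  have := (hs.const_mul A).add (hc.const_mul B)
  refine this.congr_deriv ?_
  ring

private lemma deriv_key (A B ω : ℝ) :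
    deriv (fun t => A * Real.sin (ω * t) + B * Real.cos (ω * t))
      = fun t => (-(B * ω)) * Real.sin (ω * t) + (A * ω) * Real.cos (ω * t) := by
  funext t
  exact (key A B ω t).deriv

theorem cosine_periodic_components_solve_ODE
    (ω a₀ a φ₀ φ lam₀ lam b d₀ d₁ e₀ e₁ K : ℝ)
    (hω : 0 < ω) (ha₀ : 0 < a₀) (ha : 0 < a) (hφ₀ : 0 < φ₀) (hφ : 0 < φ)
    (hlam₀ : 0 < lam₀) (hlam : 0 < lam) (hb : 0 < b)
    (hd₀ : d₀ = a₀ * ω ^ 2 + φ₀) (hd₁ : d₁ = a * ω ^ 2 + φ)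
    (he₀ : e₀ = lam₀ * ω / 2) (he₁ : e₁ = lam * ω / 2)
    (hK : K = d₀ ^ 2 * d₁ ^ 2 + 2 * d₀ * d₁ * e₀ * e₁ + d₀ ^ 2 * e₁ ^ 2 + e₀ ^ 2 * e₁ ^ 2)
    (QMj QMn : ℝ → ℝ)
    (hQMj : ∀ t, QMj t = (b * φ₀ / K) *
      ((d₀ * d₁ ^ 2 + d₁ * e₀ * e₁ + d₀ * e₁ ^ 2) * Real.sin (ω * t)
        - e₀ * e₁ ^ 2 * Real.cos (ω * t)))
    (hQMn : ∀ t, QMn t = (b * φ₀ / K) *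
      (-(d₀ * e₀ * e₁) * Real.sin (ω * t)
        + e₀ * (d₀ * d₁ + e₀ * e₁) * Real.cos (ω * t))) :
    ∀ t : ℝ,
      a₀ * deriv (deriv QMj) t - φ₀ * QMj t
        = -φ₀ * (b * Real.sin (ω * t)) - (lam / 2) * deriv QMn t ∧
      a * deriv (deriv QMn) t - φ * QMn t
        = -(lam₀ / 2) * deriv QMj t - (lam / 2) * deriv QMn t := by
  have hKpos : 0 < K := by subst hK hd₀ hd₁ he₀ he₁; positivity
  have hKne : K ≠ 0 := hKpos.ne'
  set c := b * φ₀ / K with hc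
  set A₁ : ℝ := c * (d₀ * d₁ ^ 2 + d₁ * e₀ * e₁ + d₀ * e₁ ^ 2) with hA₁
  set B₁ : ℝ := -(c * (e₀ * e₁ ^ 2)) with hB₁
  set A₂ : ℝ := c * (-(d₀ * e₀ * e₁)) with hA₂
  set B₂ : ℝ := c * (e₀ * (d₀ * d₁ + e₀ * e₁)) with hB₂
  have eQMj : QMj = fun t => A₁ * Real.sin (ω * t) + B₁ * Real.cos (ω * t) := by
    funext t; rw [hQMj]; simp [hA₁, hB₁]; ring
  have eQMn : QMn = fun t => A₂ * Real.sin (ω * t) + B₂ * Real.cos (ω * t) := by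
    funext t; rw [hQMn]; simp [hA₂, hB₂]; ring
  have dQMj : deriv QMj = fun t => (-(B₁ * ω)) * Real.sin (ω * t) + (A₁ * ω) * Real.cos (ω * t) := by
    rw [eQMj]; exact deriv_key A₁ B₁ ω
  have dQMn : deriv QMn = fun t => (-(B₂ * ω)) * Real.sin (ω * t) + (A₂ * ω) * Real.cos (ω * t) := by
    rw [eQMn]; exact deriv_key A₂ B₂ ω
  have ddQMj : deriv (deriv QMj) = fun t =>
      (-(A₁ * ω * ω)) * Real.sin (ω * t) + ((-(B₁ * ω)) * ω) * Real.cos (ω * t) := by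
    rw [dQMj]; exact deriv_key _ _ ω
  have ddQMn : deriv (deriv QMn) = fun t =>
      (-(A₂ * ω * ω)) * Real.sin (ω * t) + ((-(B₂ * ω)) * ω) * Real.cos (ω * t) := by
    rw [dQMn]; exact deriv_key _ _ ω
  have hc' : c * K = b * φ₀ := by rw [hc]; field_simp
  have Es1 : a₀ * (-(A₁ * ω * ω)) - φ₀ * A₁
      = -φ₀ * b - (lam / 2) * (-(B₂ * ω)) := by
    simp only [hA₁, hB₂]
    subst hd₀ hd₁ he₀ he₁
    linear_combination c * hK - hc'
  have Ec1 : a₀ * ((-(B₁ * ω)) * ω) - φ₀ * B₁ = -(lam / 2) * (A₂ * ω) := by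
    simp only [hB₁, hA₂]
    subst hd₀ hd₁ he₀ he₁
    ring
  have Es2 : a * (-(A₂ * ω * ω)) - φ * A₂
      = -(lam₀ / 2) * (-(B₁ * ω)) - (lam / 2) * (-(B₂ * ω)) := by
    simp only [hA₂, hB₁, hB₂]
    subst hd₀ hd₁ he₀ he₁
    ring
  have Ec2 : a * ((-(B₂ * ω)) * ω) - φ * B₂
      = -(lam₀ / 2) * (A₁ * ω) - (lam / 2) * (A₂ * ω) := by
    simp only [hB₂, hA₁, hA₂]
    subst hd₀ hd₁ he₀ he₁
    ring
  intro t
  rw [ddQMj, ddQMn, dQMj, dQMn, eQMj, eQMn]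
  constructor
  · linear_combination Real.sin (ω * t) * Es1 + Real.cos (ω * t) * Ec1
  · linear_combination Real.sin (ω * t) * Es2 + Real.cos (ω * t) * Ec2
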